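/- For the polynomial map F : ℂ² → ℂ² defined by F(x₁,x₂) = ((x₁x₂)², (x₁x₂)³ + x₁), the asymptotic set S_F equals the cuspidal cubic { (α₁, α₂) ∈ ℂ² : α₁³ = α₂² }, i.e., the set { (α², α³) : α ∈ ℂ }. -/

import Mathlib

open Filter Topology

/-- The asymptotic set of a map `F : ℂ × ℂ → ℂ × ℂ`. -/
def asymptoticSet (F : ℂ × ℂ → ℂ × ℂ) : Set (ℂ × ℂ) :=
  {a | ∃ ξ : ℕ → ℂ × ℂ,
    Tendsto (fun k => ‖ξ k‖) atTop atTop ∧ Tendsto (fun k => F (ξ k)) atTop (𝓝 a)}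

lemma eps_tendsto : Tendsto (fun k : ℕ => ((k : ℂ) + 1)⁻¹) atTop (𝓝 0) := by
  have h : Tendsto (fun k : ℕ => ((k : ℝ) + 1)⁻¹) atTop (𝓝 0) :=
    tendsto_inv_atTop_zero.comp (tendsto_atTop_add_const_right _ 1 tendsto_natCast_atTop_atTop)
  have heq : (fun k : ℕ => ((k : ℂ) + 1)⁻¹)
      = fun k : ℕ => (((((k : ℝ) + 1)⁻¹ : ℝ)) : ℂ) := by
    funext k; push_cast; ring
  rw [heq, show (0 : ℂ) = ((0 : ℝ) : ℂ) by simp]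
  exact (Complex.continuous_ofReal.tendsto 0).comp h

lemma norm_nat_add_one (k : ℕ) : ‖((k : ℂ) + 1)‖ = (k : ℝ) + 1 := by
  rw [show ((k:ℂ)+1) = ((((k:ℝ)+1) : ℝ) : ℂ) by push_cast; ring,
    Complex.norm_real, Real.norm_of_nonneg (by positivity)]

lemma mem_aux (α : ℂ) :
    (α ^ 2, α ^ 3) ∈ asymptoticSet
      (fun x : ℂ × ℂ => ((x.1 * x.2) ^ 2, (x.1 * x.2) ^ 3 + x.1)) := by
  set ε : ℕ → ℂ := fun k => ((k : ℂ) + 1)⁻¹ with hεdef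
  have hne : ∀ k : ℕ, ((k : ℂ) + 1) ≠ 0 := by
    intro k
    have := Nat.cast_add_one_ne_zero (R := ℂ) k
    push_cast at this
    exact this
  refine ⟨fun k => ((ε k) ^ 2, ((k : ℂ) + 1) ^ 2 * α + ((k : ℂ) + 1)), ?_, ?_⟩
  · -- norm tends to atTop
    have hmono : ∀ᶠ k : ℕ in atTop,
        ‖((k : ℂ) + 1) ^ 2 * α + ((k : ℂ) + 1)‖ ≤
          ‖(((ε k) ^ 2, ((k : ℂ) + 1) ^ 2 * α + ((k : ℂ) + 1)) : ℂ × ℂ)‖ :=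
      Eventually.of_forall fun k =>
        norm_snd_le (((ε k) ^ 2, ((k : ℂ) + 1) ^ 2 * α + ((k : ℂ) + 1)) : ℂ × ℂ)
    refine tendsto_atTop_mono' _ hmono ?_
    rcases eq_or_ne α 0 with hα | hα
    · simp only [hα, mul_zero, zero_add]
      simp only [norm_nat_add_one]
      exact tendsto_atTop_add_const_right _ 1 tendsto_natCast_atTop_atTop
    · have hc : 0 < ‖α‖ := norm_pos_iff.mpr hα
      have hn : Tendsto (fun k : ℕ => (k : ℝ) + 1) atTop atTop :=
        tendsto_atTop_add_const_right _ 1 tendsto_natCast_atTop_atTop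
      have hlow : Tendsto (fun k : ℕ => ((k : ℝ) + 1) * (((k : ℝ) + 1) * ‖α‖ - 1))
          atTop atTop :=
        hn.atTop_mul_atTop₀ (tendsto_atTop_add_const_right _ (-1)
          (hn.atTop_mul_const hc)) |>.congr (by intro k; ring_nf)
      refine tendsto_atTop_mono ?_ hlow
      intro k
      have h2 : ‖((k : ℂ) + 1) ^ 2 * α‖ = ((k : ℝ) + 1) ^ 2 * ‖α‖ := by
        rw [norm_mul, norm_pow, norm_nat_add_one]
      calc ((k : ℝ) + 1) * (((k : ℝ) + 1) * ‖α‖ - 1)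
          = ((k : ℝ) + 1) ^ 2 * ‖α‖ - ((k : ℝ) + 1) := by ring
        _ ≤ ‖((k : ℂ) + 1) ^ 2 * α + ((k : ℂ) + 1)‖ := by
            have h3 := norm_sub_norm_le (((k : ℂ) + 1) ^ 2 * α) (-((k : ℂ) + 1))
            rw [sub_neg_eq_add, norm_neg, h2, norm_nat_add_one] at h3
            exact h3
  · -- convergence of F ∘ ξ
    have hval : ∀ k : ℕ,
        (fun x : ℂ × ℂ => ((x.1 * x.2) ^ 2, (x.1 * x.2) ^ 3 + x.1))
          ((ε k) ^ 2, ((k : ℂ) + 1) ^ 2 * α + ((k : ℂ) + 1))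
        = ((α + ε k) ^ 2, (α + ε k) ^ 3 + (ε k) ^ 2) := by
      intro k
      have hk := hne k
      simp only [hεdef]
      field_simp
    simp only [hval]
    have h1 : Tendsto (fun k : ℕ => α + ε k) atTop (𝓝 α) := by
      have := tendsto_const_nhds (x := α) (f := atTop (α := ℕ)) |>.add eps_tendsto
      simpa using this
    have hfst : Tendsto (fun k : ℕ => (α + ε k) ^ 2) atTop (𝓝 (α ^ 2)) := h1.pow 2
    have hsnd : Tendsto (fun k : ℕ => (α + ε k) ^ 3 + (ε k) ^ 2) atTop (𝓝 (α ^ 3)) := by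
      have h2 : Tendsto (fun k : ℕ => (ε k) ^ 2) atTop (𝓝 (0 : ℂ)) := by
        simpa [hεdef] using eps_tendsto.pow 2
      have := (h1.pow 3).add h2
      simpa using this
    exact hfst.prodMk_nhds hsnd

theorem stmt_5 :
    asymptoticSet (fun x : ℂ × ℂ => ((x.1 * x.2) ^ 2, (x.1 * x.2) ^ 3 + x.1)) =
      {a : ℂ × ℂ | a.1 ^ 3 = a.2 ^ 2} ∧
    {a : ℂ × ℂ | a.1 ^ 3 = a.2 ^ 2} = {a : ℂ × ℂ | ∃ α : ℂ, a = (α ^ 2, α ^ 3)} := by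
  have hset : {a : ℂ × ℂ | a.1 ^ 3 = a.2 ^ 2} = {a : ℂ × ℂ | ∃ α : ℂ, a = (α ^ 2, α ^ 3)} := by
    ext a
    simp only [Set.mem_setOf_eq]
    constructor
    · intro h
      rcases eq_or_ne a.1 0 with h1 | h1
      · have h2 : a.2 = 0 := by
          have h3 : a.2 ^ 2 = 0 := by rw [← h, h1]; ring
          exact pow_eq_zero_iff (by norm_num) |>.mp h3
        exact ⟨0, by rw [Prod.ext_iff]; simp [h1, h2]⟩
      · refine ⟨a.2 / a.1, ?_⟩
        rw [Prod.ext_iff]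
        constructor
        · show a.1 = (a.2 / a.1) ^ 2
          field_simp
          linear_combination h
        · show a.2 = (a.2 / a.1) ^ 3
          field_simp
          linear_combination a.2 * h
    · rintro ⟨α, rfl⟩
      simp only []
      ring
  refine ⟨Set.Subset.antisymm ?_ ?_, hset⟩
  · -- S_F ⊆ cusp
    rintro a ⟨ξ, hξnorm, hξF⟩
    show a.1 ^ 3 = a.2 ^ 2
    set u : ℕ → ℂ := fun k => (ξ k).1 * (ξ k).2 with hudef
    have h1 : Tendsto (fun k => (u k) ^ 2) atTop (𝓝 a.1) :=
      (continuous_fst.tendsto a).comp hξF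
    have h2 : Tendsto (fun k => (u k) ^ 3 + (ξ k).1) atTop (𝓝 a.2) :=
      (continuous_snd.tendsto a).comp hξF
    -- bound on u
    set B : ℝ := max 1 (‖a.1‖ + 1) with hBdef
    have hB1 : (1 : ℝ) ≤ B := le_max_left _ _
    have hBu : ∀ᶠ k in atTop, ‖u k‖ ≤ B := by
      have hn : Tendsto (fun k => ‖u k‖ ^ 2) atTop (𝓝 ‖a.1‖) := by
        have := h1.norm
        simpa [norm_pow] using this
      have hev : ∀ᶠ k in atTop, ‖u k‖ ^ 2 ≤ ‖a.1‖ + 1 :=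
        hn.eventually_le_const (lt_add_one _)
      filter_upwards [hev] with k hk
      rcases le_or_gt ‖u k‖ 1 with h | h
      · exact h.trans hB1
      · have : ‖u k‖ ≤ ‖u k‖ ^ 2 := by nlinarith
        exact this.trans (hk.trans (le_max_right _ _))
    -- bound on x₁
    set D : ℝ := ‖a.2‖ + 1 + B ^ 3 with hDdef
    have hx1b : ∀ᶠ k in atTop, ‖(ξ k).1‖ ≤ D := by
      have hn : Tendsto (fun k => ‖(u k) ^ 3 + (ξ k).1‖) atTop (𝓝 ‖a.2‖) := h2.norm
      have hev : ∀ᶠ k in atTop, ‖(u k) ^ 3 + (ξ k).1‖ ≤ ‖a.2‖ + 1 :=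
        hn.eventually_le_const (lt_add_one _)
      filter_upwards [hev, hBu] with k hk hBk
      have h3 : ‖(ξ k).1‖ ≤ ‖(u k) ^ 3 + (ξ k).1‖ + ‖(u k) ^ 3‖ := by
        have := norm_sub_le ((u k) ^ 3 + (ξ k).1) ((u k) ^ 3)
        simpa using this
      have h4 : ‖(u k) ^ 3‖ ≤ B ^ 3 := by
        rw [norm_pow]
        exact pow_le_pow_left₀ (norm_nonneg _) hBk 3
      calc ‖(ξ k).1‖ ≤ ‖(u k) ^ 3 + (ξ k).1‖ + ‖(u k) ^ 3‖ := h3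
        _ ≤ (‖a.2‖ + 1) + B ^ 3 := add_le_add hk h4
        _ = D := by rw [hDdef]
    -- ‖x₂‖ → ∞
    have hx2 : Tendsto (fun k => ‖(ξ k).2‖) atTop atTop := by
      have hlow : Tendsto (fun k => ‖ξ k‖ - D) atTop atTop :=
        tendsto_atTop_add_const_right _ (-D) hξnorm
      refine tendsto_atTop_mono' _ ?_ hlow
      filter_upwards [hx1b] with k hk
      have hmax : ‖ξ k‖ = max ‖(ξ k).1‖ ‖(ξ k).2‖ := Prod.norm_def _
      have : ‖ξ k‖ ≤ D + ‖(ξ k).2‖ := by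
        rw [hmax]
        rcases max_cases ‖(ξ k).1‖ ‖(ξ k).2‖ with ⟨he, _⟩ | ⟨he, _⟩
        · rw [he]; have := norm_nonneg (ξ k).2; linarith
        · rw [he]; have hD : 0 ≤ D := le_trans (norm_nonneg _) hk; linarith
      linarith
    -- x₁ → 0
    have hx1zero : Tendsto (fun k => (ξ k).1) atTop (𝓝 0) := by
      rw [tendsto_zero_iff_norm_tendsto_zero]
      have hg : Tendsto (fun k => B / ‖(ξ k).2‖) atTop (𝓝 0) :=
        Tendsto.div_atTop tendsto_const_nhds hx2
      refine squeeze_zero' (Eventually.of_forall fun k => norm_nonneg _) ?_ hg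
      filter_upwards [hBu, hx2.eventually_ge_atTop 1] with k hBk h1k
      have hne : (ξ k).2 ≠ 0 := by
        intro h
        rw [h] at h1k
        simp at h1k
        linarith
      have hx1eq : (ξ k).1 = u k / (ξ k).2 := by
        rw [hudef]
        field_simp
      rw [hx1eq, norm_div]
      exact div_le_div₀ (le_trans zero_le_one hB1) hBk (by linarith) le_rfl
    have h3 : Tendsto (fun k => (u k) ^ 3) atTop (𝓝 a.2) := by
      have := h2.sub hx1zero
      simpa using this
    have hA : Tendsto (fun k => ((u k) ^ 2) ^ 3) atTop (𝓝 (a.1 ^ 3)) := h1.pow 3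
    have hB' : Tendsto (fun k => ((u k) ^ 3) ^ 2) atTop (𝓝 (a.2 ^ 2)) := h3.pow 2
    have heq : (fun k => ((u k) ^ 2) ^ 3) = fun k => ((u k) ^ 3) ^ 2 := by
      funext k; ring
    rw [heq] at hA
    exact tendsto_nhds_unique hA hB'
  · -- cusp ⊆ S_F
    intro a ha
    have : a ∈ {a : ℂ × ℂ | ∃ α : ℂ, a = (α ^ 2, α ^ 3)} := hset ▸ ha
    obtain ⟨α, rfl⟩ := this
    exact mem_aux α
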